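/- arXiv:0705.1270 — 2 statements merged into one kernel-verified Lean document; each statement's English description precedes it below -/
import Mathlib

section
/- (Conditional-on-baseline identifiability) Under consistency, temporal ordering, SRA, and positivity, for every t with s-1 ≤ t ≤ K, every regimen ā(t-s+1,t), and every value v of V(t-s+1) with positive probability: E[ Y_{ā(t-s+1,t)}(t+1) | V(t-s+1)=v ] = E[ 1{Ā(t-s+1,t)=ā(t-s+1,t)} Y(t+1) / ∏_{j=t-s+1}^{t} g(A(j)|Ā(j-1),L̄(j)) | V(t-s+1)=v ]. -/
open Finset
open scoped Classical

noncomputable section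

def pr {Ω : Type} [Fintype Ω] (μ : Ω → ℝ) (E : Ω → Prop) : ℝ :=
  ∑ ω, if E ω then μ ω else 0

def cpr {Ω : Type} [Fintype Ω] (μ : Ω → ℝ) (E F : Ω → Prop) : ℝ :=
  pr μ (fun ω => E ω ∧ F ω) / pr μ F

lemma pr_congr {Ω : Type} [Fintype Ω] (μ : Ω → ℝ) {E F : Ω → Prop}
    (h : ∀ ω, E ω ↔ F ω) : pr μ E = pr μ F :=
  Finset.sum_congr rfl fun ω _ => if_congr (h ω) rfl rfl

lemma cpr_congr {Ω : Type} [Fintype Ω] (μ : Ω → ℝ) {E E' F F' : Ω → Prop}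
    (hE : ∀ ω, E ω ↔ E' ω) (hF : ∀ ω, F ω ↔ F' ω) : cpr μ E F = cpr μ E' F' := by
  unfold cpr
  rw [pr_congr μ (fun ω => and_congr (hE ω) (hF ω)), pr_congr μ hF]

lemma pr_pos {Ω : Type} [Fintype Ω] (μ : Ω → ℝ) (hμ : ∀ ω, 0 ≤ μ ω)
    {E : Ω → Prop} (ω₀ : Ω) (h : E ω₀) (h0 : 0 < μ ω₀) : 0 < pr μ E := by
  refine Finset.sum_pos' (fun ω _ => ?_) ⟨ω₀, Finset.mem_univ ω₀, ?_⟩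
  · by_cases hE : E ω
    · rw [if_pos hE]; exact hμ ω
    · rw [if_neg hE]
  · rw [if_pos h]; exact h0

lemma Lmatch {Ω 𝒜 ℒ : Type} (A : ℕ → Ω → 𝒜) (CL : (ℕ → 𝒜) → ℕ → Ω → ℒ) (L : ℕ → Ω → ℒ)
    (hTO : ∀ (a a' : ℕ → 𝒜) (j : ℕ), (∀ i < j, a i = a' i) → ∀ ω, CL a j ω = CL a' j ω)
    (hcons : ∀ j ω, L j ω = CL (fun i => A i ω) j ω)
    (j : ℕ) (ω ω' : Ω)
    (hA : ∀ i < j, A i ω = A i ω') (hX : ∀ ar jj, CL ar jj ω = CL ar jj ω') :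
    ∀ i ≤ j, L i ω = L i ω' := by
  intro i hi
  rw [hcons, hcons,
    hTO (fun i' => A i' ω) (fun i' => A i' ω') i
      (fun i' hi' => hA i' (lt_of_lt_of_le hi' hi)) ω, hX]

lemma step_lemma {Ω 𝒜 ℒ : Type} [Fintype Ω]
    (μ : Ω → ℝ) (hμ : ∀ ω, 0 ≤ μ ω)
    (A : ℕ → Ω → 𝒜) (CL : (ℕ → 𝒜) → ℕ → Ω → ℒ) (L : ℕ → Ω → ℒ)
    (hTO : ∀ (a a' : ℕ → 𝒜) (j : ℕ), (∀ i < j, a i = a' i) → ∀ ω, CL a j ω = CL a' j ω)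
    (hcons : ∀ j ω, L j ω = CL (fun i => A i ω) j ω)
    (j : ℕ) (aj : 𝒜)
    (SRAj : ∀ (x : (ℕ → 𝒜) → ℕ → ℒ) (ω₀ : Ω),
      pr μ (fun ω => (∀ i < j, A i ω = A i ω₀) ∧ (∀ i ≤ j, L i ω = L i ω₀)) > 0 →
      cpr μ (fun ω => A j ω = aj ∧ ∀ ar jj, CL ar jj ω = x ar jj)
        (fun ω => (∀ i < j, A i ω = A i ω₀) ∧ (∀ i ≤ j, L i ω = L i ω₀)) =
      cpr μ (fun ω => A j ω = aj)
        (fun ω => (∀ i < j, A i ω = A i ω₀) ∧ (∀ i ≤ j, L i ω = L i ω₀)) *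
      cpr μ (fun ω => ∀ ar jj, CL ar jj ω = x ar jj)
        (fun ω => (∀ i < j, A i ω = A i ω₀) ∧ (∀ i ≤ j, L i ω = L i ω₀)))
    (POSj : ∀ ω₀ : Ω, 0 < μ ω₀ →
      0 < cpr μ (fun ω' => A j ω' = aj)
        (fun ω' => (∀ i < j, A i ω' = A i ω₀) ∧ (∀ i ≤ j, L i ω' = L i ω₀)))
    (φ : Ω → ℝ)
    (hφ : ∀ ω ω', (∀ i < j, A i ω = A i ω') → (∀ ar jj, CL ar jj ω = CL ar jj ω') →
      φ ω = φ ω') :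
    ∑ ω, φ ω * μ ω =
    ∑ ω, if A j ω = aj then φ ω * μ ω /
        cpr μ (fun ω' => A j ω' = aj)
          (fun ω' => (∀ i < j, A i ω' = A i ω) ∧ (∀ i ≤ j, L i ω' = L i ω)) else 0 := by
  classical
  set key : Ω → (Fin j → 𝒜) × ((ℕ → 𝒜) → ℕ → ℒ) :=
    fun ω => (fun i => A i.1 ω, fun ar jj => CL ar jj ω) with hkey
  have hmaps : ∀ ω ∈ (Finset.univ : Finset Ω), key ω ∈ Finset.univ.image key :=
    fun ω _ => Finset.mem_image_of_mem _ (Finset.mem_univ ω)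
  rw [← Finset.sum_fiberwise_of_maps_to hmaps (fun ω => φ ω * μ ω),
      ← Finset.sum_fiberwise_of_maps_to hmaps (fun ω =>
        if A j ω = aj then φ ω * μ ω /
          cpr μ (fun ω' => A j ω' = aj)
            (fun ω' => (∀ i < j, A i ω' = A i ω) ∧ (∀ i ≤ j, L i ω' = L i ω)) else 0)]
  refine Finset.sum_congr rfl fun k _ => ?_
  by_cases hpos : ∃ ω₀, (key ω₀ = k ∧ 0 < μ ω₀)
  · obtain ⟨ω₀, hk₀, hμ₀⟩ := hpos
    have hAk : ∀ ω, key ω = k → ∀ i < j, A i ω = A i ω₀ := fun ω hk' i hi =>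
      congrFun (congrArg Prod.fst (hk'.trans hk₀.symm)) (⟨i, hi⟩ : Fin j)
    have hXk : ∀ ω, key ω = k → ∀ ar jj, CL ar jj ω = CL ar jj ω₀ := fun ω hk' ar jj =>
      congrFun (congrFun (congrArg Prod.snd (hk'.trans hk₀.symm)) ar) jj
    have hLk : ∀ ω, key ω = k → ∀ i ≤ j, L i ω = L i ω₀ := fun ω hk' =>
      Lmatch A CL L hTO hcons j ω ω₀ (hAk ω hk') (hXk ω hk')
    have hS : ∀ ω, key ω = k ↔ ((∀ ar jj, CL ar jj ω = CL ar jj ω₀) ∧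
        ((∀ i < j, A i ω = A i ω₀) ∧ (∀ i ≤ j, L i ω = L i ω₀))) := by
      intro ω
      constructor
      · intro h
        exact ⟨hXk ω h, hAk ω h, hLk ω h⟩
      · rintro ⟨hQ, hA', _⟩
        rw [← hk₀]
        exact Prod.ext (funext fun i => hA' i.1 i.2)
          (funext fun ar => funext fun jj => hQ ar jj)
    have prP : 0 < pr μ (fun ω' => (∀ i < j, A i ω' = A i ω₀) ∧ (∀ i ≤ j, L i ω' = L i ω₀)) :=
      pr_pos μ hμ ω₀ ⟨fun _ _ => rfl, fun _ _ => rfl⟩ hμ₀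
    have gpos := POSj ω₀ hμ₀
    have hSRA := SRAj (fun ar jj => CL ar jj ω₀) ω₀ prP
    -- turn SRA into an unconditional statement
    have hkeyid : pr μ (fun ω => (A j ω = aj ∧ ∀ ar jj, CL ar jj ω = CL ar jj ω₀) ∧
          ((∀ i < j, A i ω = A i ω₀) ∧ (∀ i ≤ j, L i ω = L i ω₀))) =
        cpr μ (fun ω' => A j ω' = aj)
          (fun ω' => (∀ i < j, A i ω' = A i ω₀) ∧ (∀ i ≤ j, L i ω' = L i ω₀)) *
        pr μ (fun ω => (∀ ar jj, CL ar jj ω = CL ar jj ω₀) ∧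
          ((∀ i < j, A i ω = A i ω₀) ∧ (∀ i ≤ j, L i ω = L i ω₀))) := by
      have hne : pr μ (fun ω' => (∀ i < j, A i ω' = A i ω₀) ∧ (∀ i ≤ j, L i ω' = L i ω₀)) ≠ 0 :=
        ne_of_gt prP
      unfold cpr at hSRA ⊢
      rw [div_eq_iff hne] at hSRA
      rw [hSRA]
      field_simp
    -- the fiber sums
    have hconst : ∀ ω, key ω = k → φ ω = φ ω₀ := fun ω hk' =>
      hφ ω ω₀ (hAk ω hk') (hXk ω hk')
    have hcprconst : ∀ ω, key ω = k →
        cpr μ (fun ω' => A j ω' = aj)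
          (fun ω' => (∀ i < j, A i ω' = A i ω) ∧ (∀ i ≤ j, L i ω' = L i ω)) =
        cpr μ (fun ω' => A j ω' = aj)
          (fun ω' => (∀ i < j, A i ω' = A i ω₀) ∧ (∀ i ≤ j, L i ω' = L i ω₀)) := by
      intro ω hk'
      refine cpr_congr μ (fun _ => Iff.rfl) (fun ω' => and_congr ?_ ?_)
      · exact ⟨fun h i hi => (h i hi).trans (hAk ω hk' i hi),
          fun h i hi => (h i hi).trans (hAk ω hk' i hi).symm⟩
      · exact ⟨fun h i hi => (h i hi).trans (hLk ω hk' i hi),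
          fun h i hi => (h i hi).trans (hLk ω hk' i hi).symm⟩
    have hsum1 : ∑ ω ∈ Finset.univ.filter (fun ω => key ω = k), μ ω =
        pr μ (fun ω => (∀ ar jj, CL ar jj ω = CL ar jj ω₀) ∧
          ((∀ i < j, A i ω = A i ω₀) ∧ (∀ i ≤ j, L i ω = L i ω₀))) := by
      rw [Finset.sum_filter]
      refine Finset.sum_congr rfl fun ω _ => ?_
      by_cases h1 : key ω = k
      · rw [if_pos h1, if_pos ((hS ω).mp h1)]
      · rw [if_neg h1, if_neg (fun hc => h1 ((hS ω).mpr hc))]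
    have hsum2 : ∑ ω ∈ Finset.univ.filter (fun ω => key ω = k),
          (if A j ω = aj then μ ω else 0) =
        pr μ (fun ω => (A j ω = aj ∧ ∀ ar jj, CL ar jj ω = CL ar jj ω₀) ∧
          ((∀ i < j, A i ω = A i ω₀) ∧ (∀ i ≤ j, L i ω = L i ω₀))) := by
      rw [Finset.sum_filter]
      refine Finset.sum_congr rfl fun ω _ => ?_
      by_cases h1 : key ω = k
      · rw [if_pos h1]
        obtain ⟨hQ, hP⟩ := (hS ω).mp h1
        by_cases h2 : A j ω = aj
        · rw [if_pos h2, if_pos ⟨⟨h2, hQ⟩, hP⟩]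
        · rw [if_neg h2, if_neg (fun hc => h2 hc.1.1)]
      · rw [if_neg h1, if_neg (fun hc => h1 ((hS ω).mpr ⟨hc.1.2, hc.2⟩))]
    calc ∑ ω ∈ Finset.univ.filter (fun ω => key ω = k), φ ω * μ ω
        = ∑ ω ∈ Finset.univ.filter (fun ω => key ω = k), φ ω₀ * μ ω :=
          Finset.sum_congr rfl fun ω hω => by
            rw [hconst ω (Finset.mem_filter.mp hω).2]
      _ = φ ω₀ * ∑ ω ∈ Finset.univ.filter (fun ω => key ω = k), μ ω := by
            rw [Finset.mul_sum]
      _ = φ ω₀ * pr μ (fun ω => (∀ ar jj, CL ar jj ω = CL ar jj ω₀) ∧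
            ((∀ i < j, A i ω = A i ω₀) ∧ (∀ i ≤ j, L i ω = L i ω₀))) := by rw [hsum1]
      _ = (φ ω₀ / cpr μ (fun ω' => A j ω' = aj)
            (fun ω' => (∀ i < j, A i ω' = A i ω₀) ∧ (∀ i ≤ j, L i ω' = L i ω₀))) *
          pr μ (fun ω => (A j ω = aj ∧ ∀ ar jj, CL ar jj ω = CL ar jj ω₀) ∧
            ((∀ i < j, A i ω = A i ω₀) ∧ (∀ i ≤ j, L i ω = L i ω₀))) := by
            rw [hkeyid, ← mul_assoc, div_mul_cancel₀ _ (ne_of_gt gpos)]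
      _ = ∑ ω ∈ Finset.univ.filter (fun ω => key ω = k),
            (φ ω₀ / cpr μ (fun ω' => A j ω' = aj)
              (fun ω' => (∀ i < j, A i ω' = A i ω₀) ∧ (∀ i ≤ j, L i ω' = L i ω₀))) *
            (if A j ω = aj then μ ω else 0) := by rw [← Finset.mul_sum, hsum2]
      _ = ∑ ω ∈ Finset.univ.filter (fun ω => key ω = k),
            (if A j ω = aj then φ ω * μ ω /
              cpr μ (fun ω' => A j ω' = aj)
                (fun ω' => (∀ i < j, A i ω' = A i ω) ∧ (∀ i ≤ j, L i ω' = L i ω)) else 0) := by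
            refine Finset.sum_congr rfl fun ω hω => ?_
            have hk' := (Finset.mem_filter.mp hω).2
            rw [hcprconst ω hk', hconst ω hk']
            by_cases h2 : A j ω = aj
            · rw [if_pos h2, if_pos h2]; ring
            · rw [if_neg h2, if_neg h2, mul_zero]
  · push_neg at hpos
    have hz : ∀ ω, key ω = k → μ ω = 0 := fun ω h =>
      le_antisymm (hpos ω h) (hμ ω)
    rw [Finset.sum_eq_zero, Finset.sum_eq_zero]
    · intro ω hω
      rw [hz ω (Finset.mem_filter.mp hω).2]
      simp
    · intro ω hω
      rw [hz ω (Finset.mem_filter.mp hω).2, mul_zero]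

def ex {Ω : Type} [Fintype Ω] (μ : Ω → ℝ) (f : Ω → ℝ) : ℝ :=
  ∑ ω, f ω * μ ω

def cex {Ω : Type} [Fintype Ω] (μ : Ω → ℝ) (f : Ω → ℝ) (F : Ω → Prop) : ℝ :=
  (∑ ω, if F ω then f ω * μ ω else 0) / pr μ F

/-- conditional-on-baseline identifiability: the baseline-conditional
mean of the history-restricted counterfactual outcome equals the conditional mean
of the IPTW-transformed observed outcome. -/
theorem hrmsm_conditional_identifiability
    {Ω 𝒜 ℒ 𝒱 : Type} [Fintype Ω]
    (μ : Ω → ℝ) (hμ : ∀ ω, 0 ≤ μ ω) (hsum : ∑ ω, μ ω = 1)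
    (K s : ℕ) (hs : 1 ≤ s) (hsK : s ≤ K + 1)
    (A : ℕ → Ω → 𝒜) (CL : (ℕ → 𝒜) → ℕ → Ω → ℒ) (L : ℕ → Ω → ℒ) (Y : ℒ → ℝ)
    (hTO : ∀ (a a' : ℕ → 𝒜) (j : ℕ), (∀ i < j, a i = a' i) → ∀ ω, CL a j ω = CL a' j ω)
    (hcons : ∀ j ω, L j ω = CL (fun i => A i ω) j ω)
    (SRA : ∀ j ≤ K, ∀ (a : 𝒜) (x : (ℕ → 𝒜) → ℕ → ℒ) (ab : ℕ → 𝒜) (lb : ℕ → ℒ),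
      pr μ (fun ω => (∀ i < j, A i ω = ab i) ∧ (∀ i ≤ j, L i ω = lb i)) > 0 →
      cpr μ (fun ω => A j ω = a ∧ ∀ (ar : ℕ → 𝒜) (jj : ℕ), CL ar jj ω = x ar jj)
        (fun ω => (∀ i < j, A i ω = ab i) ∧ (∀ i ≤ j, L i ω = lb i)) =
      cpr μ (fun ω => A j ω = a)
        (fun ω => (∀ i < j, A i ω = ab i) ∧ (∀ i ≤ j, L i ω = lb i)) *
      cpr μ (fun ω => ∀ (ar : ℕ → 𝒜) (jj : ℕ), CL ar jj ω = x ar jj)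
        (fun ω => (∀ i < j, A i ω = ab i) ∧ (∀ i ≤ j, L i ω = lb i)))
    (t : ℕ) (ht1 : s - 1 ≤ t) (ht2 : t ≤ K) (ab : ℕ → 𝒜)
    (POS : ∀ j, t + 1 - s ≤ j → j ≤ t → ∀ (a : 𝒜) (ω : Ω), μ ω > 0 →
      cpr μ (fun ω' => A j ω' = a)
        (fun ω' => (∀ i < j, A i ω' = A i ω) ∧ (∀ i ≤ j, L i ω' = L i ω)) > 0)
    (V : Ω → 𝒱)
    (hV : ∀ ω ω', (∀ i < t + 1 - s, A i ω = A i ω') →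
      (∀ i ≤ t + 1 - s, L i ω = L i ω') → V ω = V ω')
    (v : 𝒱) (hv : pr μ (fun ω => V ω = v) > 0) :
    cex μ (fun ω => Y (CL (fun i => if i < t + 1 - s then A i ω else ab i) (t + 1) ω))
      (fun ω => V ω = v) =
    cex μ (fun ω =>
      (if ∀ j, t + 1 - s ≤ j → j ≤ t → A j ω = ab j then (1 : ℝ) else 0) *
      Y (L (t + 1) ω) /
      ∏ j ∈ Finset.Ico (t + 1 - s) (t + 1),
        cpr μ (fun ω' => A j ω' = A j ω)
          (fun ω' => (∀ i < j, A i ω' = A i ω) ∧ (∀ i ≤ j, L i ω' = L i ω)))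
      (fun ω => V ω = v) := by
  classical
  set m := t + 1 - s with hm
  have hmt : m ≤ t := by omega
  set N : ℕ → ℝ := fun j => ∑ ω, if V ω = v ∧ (∀ i, m ≤ i → i < j → A i ω = ab i) then
      Y (CL (fun i => if i < m then A i ω else ab i) (t + 1) ω) * μ ω /
        ∏ i ∈ Finset.Ico m j, cpr μ (fun ω' => A i ω' = A i ω)
          (fun ω' => (∀ i' < i, A i' ω' = A i' ω) ∧ (∀ i' ≤ i, L i' ω' = L i' ω)) else 0
    with hN
  have hstep : ∀ j, m ≤ j → j ≤ t → N j = N (j + 1) := by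
    intro j hmj hjt
    set φ : Ω → ℝ := fun ω => if V ω = v ∧ (∀ i, m ≤ i → i < j → A i ω = ab i) then
        Y (CL (fun i => if i < m then A i ω else ab i) (t + 1) ω) /
          ∏ i ∈ Finset.Ico m j, cpr μ (fun ω' => A i ω' = A i ω)
            (fun ω' => (∀ i' < i, A i' ω' = A i' ω) ∧ (∀ i' ≤ i, L i' ω' = L i' ω)) else 0
      with hφdef
    have hφ : ∀ σ τ, (∀ i < j, A i σ = A i τ) →
        (∀ ar jj, CL ar jj σ = CL ar jj τ) → φ σ = φ τ := by
      intro σ τ hA hX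
      have hLm : ∀ i ≤ j, L i σ = L i τ := Lmatch A CL L hTO hcons j σ τ hA hX
      have hVeq : V σ = V τ := hV σ τ (fun i hi => hA i (by omega)) (fun i hi => hLm i (by omega))
      have hc : (V σ = v ∧ (∀ i, m ≤ i → i < j → A i σ = ab i)) ↔
          (V τ = v ∧ (∀ i, m ≤ i → i < j → A i τ = ab i)) := by
        rw [hVeq]
        exact and_congr Iff.rfl
          ⟨fun h i h1 h2 => (hA i h2).symm.trans (h i h1 h2),
           fun h i h1 h2 => (hA i h2).trans (h i h1 h2)⟩
      have hY : Y (CL (fun i => if i < m then A i σ else ab i) (t + 1) σ) =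
          Y (CL (fun i => if i < m then A i τ else ab i) (t + 1) τ) := by
        have hfa : (fun i => if i < m then A i σ else ab i) =
            (fun i => if i < m then A i τ else ab i) := by
          funext i
          by_cases h : i < m
          · rw [if_pos h, if_pos h, hA i (by omega)]
          · rw [if_neg h, if_neg h]
        rw [hfa, hX]
      have hW : (∏ i ∈ Finset.Ico m j, cpr μ (fun ω' => A i ω' = A i σ)
            (fun ω' => (∀ i' < i, A i' ω' = A i' σ) ∧ (∀ i' ≤ i, L i' ω' = L i' σ))) =
          (∏ i ∈ Finset.Ico m j, cpr μ (fun ω' => A i ω' = A i τ)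
            (fun ω' => (∀ i' < i, A i' ω' = A i' τ) ∧ (∀ i' ≤ i, L i' ω' = L i' τ))) := by
        refine Finset.prod_congr rfl fun i hi => ?_
        have hij : i < j := (Finset.mem_Ico.mp hi).2
        refine cpr_congr μ (fun ω'' => by rw [hA i hij]) (fun ω'' => and_congr ?_ ?_)
        · exact ⟨fun h i' h' => (h i' h').trans (hA i' (h'.trans hij)),
            fun h i' h' => (h i' h').trans (hA i' (h'.trans hij)).symm⟩
        · exact ⟨fun h i' h' => (h i' h').trans (hLm i' (h'.trans hij.le)),
            fun h i' h' => (h i' h').trans (hLm i' (h'.trans hij.le)).symm⟩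
      simp only [hφdef]
      by_cases hcσ : V σ = v ∧ (∀ i, m ≤ i → i < j → A i σ = ab i)
      · rw [if_pos hcσ, if_pos (hc.mp hcσ), hY, hW]
      · rw [if_neg hcσ, if_neg (fun h => hcσ (hc.mpr h))]
    have h1 : N j = ∑ ω, φ ω * μ ω := by
      simp only [hN, hφdef]
      refine Finset.sum_congr rfl fun ω _ => ?_
      by_cases hc : V ω = v ∧ (∀ i, m ≤ i → i < j → A i ω = ab i)
      · rw [if_pos hc, if_pos hc, div_mul_eq_mul_div]
      · rw [if_neg hc, if_neg hc, zero_mul]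
    have h2 := step_lemma μ hμ A CL L hTO hcons j (ab j)
        (fun x ω₀ hp => SRA j (le_trans hjt ht2) (ab j) x (fun i => A i ω₀)
          (fun i => L i ω₀) hp)
        (fun ω₀ h0 => POS j (by omega) hjt (ab j) ω₀ h0) φ hφ
    rw [h1, h2]
    simp only [hN]
    refine Finset.sum_congr rfl fun ω _ => ?_
    by_cases hAj : A j ω = ab j
    · rw [if_pos hAj]
      simp only [hφdef]
      by_cases hc : V ω = v ∧ (∀ i, m ≤ i → i < j → A i ω = ab i)
      · have hc' : V ω = v ∧ ∀ i, m ≤ i → i < j + 1 → A i ω = ab i :=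
          ⟨hc.1, fun i h1' h2' => by
            rcases Nat.lt_succ_iff_lt_or_eq.mp h2' with h | h
            · exact hc.2 i h1' h
            · rw [h]; exact hAj⟩
        have hg : cpr μ (fun ω' => A j ω' = A j ω)
            (fun ω' => (∀ i' < j, A i' ω' = A i' ω) ∧ (∀ i' ≤ j, L i' ω' = L i' ω)) =
            cpr μ (fun ω' => A j ω' = ab j)
            (fun ω' => (∀ i < j, A i ω' = A i ω) ∧ (∀ i ≤ j, L i ω' = L i ω)) :=
          cpr_congr μ (fun σ => by rw [hAj]) (fun σ => Iff.rfl)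
        rw [if_pos hc, if_pos hc', Finset.prod_Ico_succ_top hmj, div_mul_eq_mul_div,
          div_div, hg]
      · rw [if_neg hc,
          if_neg (fun h => hc ⟨h.1, fun i hh1 hh2 => h.2 i hh1 (Nat.lt_succ_of_lt hh2)⟩),
          zero_mul, zero_div]
    · rw [if_neg hAj, if_neg (fun h => hAj (h.2 j hmj (Nat.lt_succ_self j)))]
  have hmain : ∀ j, m ≤ j → j ≤ t + 1 → N m = N j := by
    intro j hj
    induction j, hj using Nat.le_induction with
    | base => intro _; rfl
    | succ j hj ih =>
      intro hj1
      rw [ih (by omega), hstep j hj (by omega)]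
  have hL0 : (∑ ω, if V ω = v then
      Y (CL (fun i => if i < m then A i ω else ab i) (t + 1) ω) * μ ω else 0) = N m := by
    simp only [hN]
    refine Finset.sum_congr rfl fun ω _ => ?_
    rw [Finset.Ico_self, Finset.prod_empty, div_one]
    by_cases hVv : V ω = v
    · rw [if_pos hVv, if_pos ⟨hVv, fun i h1 h2 => absurd h2 (by omega)⟩]
    · rw [if_neg hVv, if_neg (fun h => hVv h.1)]
  have hR : N (t + 1) = ∑ ω, if V ω = v then
      ((if ∀ j, m ≤ j → j ≤ t → A j ω = ab j then (1 : ℝ) else 0) * Y (L (t + 1) ω) /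
        ∏ j ∈ Finset.Ico m (t + 1), cpr μ (fun ω' => A j ω' = A j ω)
          (fun ω' => (∀ i < j, A i ω' = A i ω) ∧ (∀ i ≤ j, L i ω' = L i ω))) * μ ω else 0 := by
    simp only [hN]
    refine Finset.sum_congr rfl fun ω _ => ?_
    by_cases hVv : V ω = v
    · by_cases hcc : ∀ j', m ≤ j' → j' ≤ t → A j' ω = ab j'
      · have hc' : V ω = v ∧ ∀ i, m ≤ i → i < t + 1 → A i ω = ab i :=
          ⟨hVv, fun i h1 h2 => hcc i h1 (by omega)⟩
        have hCL : CL (fun i => if i < m then A i ω else ab i) (t + 1) ω = L (t + 1) ω := by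
          rw [hcons (t + 1) ω]
          refine hTO _ _ (t + 1) (fun i hi => ?_) ω
          by_cases h : i < m
          · rw [if_pos h]
          · rw [if_neg h]; exact (hcc i (by omega) (by omega)).symm
        rw [if_pos hc', if_pos hVv, if_pos hcc, hCL, one_mul, div_mul_eq_mul_div]
      · rw [if_neg (fun h => hcc (fun j' h1 h2 => h.2 j' h1 (by omega))), if_pos hVv,
          if_neg hcc, zero_mul, zero_div, zero_mul]
    · rw [if_neg (fun h => hVv h.1), if_neg hVv]
  simp only [cex]
  rw [hL0, hmain (t + 1) (by omega) (le_refl _), hR]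

end
end

section
/- (Pooled IPTW estimating equation unbiasedness) Under consistency, temporal ordering, SRA, positivity, and a correctly specified pooled HRMSM m(t, ā(t-s+1,t), V(t-s+1) | β*) = E[Y_{ā(t-s+1,t)}(t+1) | V(t-s+1)] for all t ∈ 𝒯_s and all regimens, the pooled IPTW estimating function has mean zero at β*: E[ Σ_{t ∈ 𝒯_s} h(t, Ā(t-s+1,t), V(t-s+1)) · (Y(t+1) − m(t, Ā(t-s+1,t), V(t-s+1) | β*)) / ∏_{j=t-s+1}^{t} g(A(j)|Ā(j-1),L̄(j)) ] = 0, for any bounded function h of (t, Ā(t-s+1,t), V(t-s+1)). -/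
open Finset
open scoped Classical

noncomputable section

lemma pr_nonneg {Ω : Type} [Fintype Ω] {μ : Ω → ℝ} (hμ : ∀ ω, 0 ≤ μ ω) (P : Ω → Prop) :
    0 ≤ pr μ P := by
  unfold pr
  refine Finset.sum_nonneg fun ω _ => ?_
  by_cases hP : P ω <;> simp [hP, hμ ω]

lemma mu_eq_zero {Ω : Type} [Fintype Ω] {μ : Ω → ℝ} (hμ : ∀ ω, 0 ≤ μ ω) {P : Ω → Prop}
    (h0 : pr μ P = 0) (ω : Ω) (hP : P ω) : μ ω = 0 := by
  by_contra hne
  have hpos : 0 < μ ω := lt_of_le_of_ne (hμ ω) (Ne.symm hne)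
  have : 0 < pr μ P := by
    unfold pr
    refine Finset.sum_pos' (fun ω' _ => ?_) ⟨ω, Finset.mem_univ ω, ?_⟩
    · by_cases h : P ω' <;> simp [h, hμ ω']
    · simp [hP, hpos]
  linarith

lemma pr_pos_elim {Ω : Type} [Fintype Ω] {μ : Ω → ℝ} (hμ : ∀ ω, 0 ≤ μ ω) {P : Ω → Prop}
    (h : 0 < pr μ P) : ∃ ω, P ω ∧ 0 < μ ω := by
  by_contra hc
  push_neg at hc
  have : pr μ P = 0 := by
    unfold pr
    refine Finset.sum_eq_zero fun ω _ => ?_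
    by_cases hP : P ω
    · simp only [if_pos hP]
      exact le_antisymm (hc ω hP) (hμ ω)
    · simp [hP]
  linarith

lemma peel {Ω 𝒜 ℒ : Type} [Fintype Ω] [Nonempty Ω] (μ : Ω → ℝ) (hμ : ∀ ω, 0 ≤ μ ω)
    (A : ℕ → Ω → 𝒜) (L : ℕ → Ω → ℒ) (CL : (ℕ → 𝒜) → ℕ → Ω → ℒ)
    (j : ℕ) (a : 𝒜)
    (SRAj : ∀ (x : (ℕ → 𝒜) → ℕ → ℒ) (ab : ℕ → 𝒜) (lb : ℕ → ℒ),
      pr μ (fun ω => (∀ i < j, A i ω = ab i) ∧ (∀ i ≤ j, L i ω = lb i)) > 0 →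
      cpr μ (fun ω => A j ω = a ∧ ∀ (ar : ℕ → 𝒜) (jj : ℕ), CL ar jj ω = x ar jj)
        (fun ω => (∀ i < j, A i ω = ab i) ∧ (∀ i ≤ j, L i ω = lb i)) =
      cpr μ (fun ω => A j ω = a)
        (fun ω => (∀ i < j, A i ω = ab i) ∧ (∀ i ≤ j, L i ω = lb i)) *
      cpr μ (fun ω => ∀ (ar : ℕ → 𝒜) (jj : ℕ), CL ar jj ω = x ar jj)
        (fun ω => (∀ i < j, A i ω = ab i) ∧ (∀ i ≤ j, L i ω = lb i)))
    (POSj : ∀ ω : Ω, μ ω > 0 →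
      cpr μ (fun ω' => A j ω' = a)
        (fun ω' => (∀ i < j, A i ω' = A i ω) ∧ (∀ i ≤ j, L i ω' = L i ω)) > 0)
    (R : Ω → ℝ)
    (hR : ∀ ω ω', (∀ ar jj, CL ar jj ω = CL ar jj ω') → (∀ i < j, A i ω = A i ω') →
      R ω = R ω') :
    ∑ ω, (if A j ω = a then
        R ω / cpr μ (fun ω' => A j ω' = a)
          (fun ω' => (∀ i < j, A i ω' = A i ω) ∧ (∀ i ≤ j, L i ω' = L i ω))
      else 0) * μ ω = ∑ ω, R ω * μ ω := by
  classical
  obtain ⟨ω₀⟩ := ‹Nonempty Ω›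
  set d : Ω → (ℕ → 𝒜) × (ℕ → ℒ) := fun ω =>
    (fun i => if i < j then A i ω else A i ω₀, fun i => if i ≤ j then L i ω else L i ω₀)
    with hd
  have hdiff : ∀ ω ω₁ : Ω, d ω = d ω₁ ↔
      ((∀ i < j, A i ω = A i ω₁) ∧ (∀ i ≤ j, L i ω = L i ω₁)) := by
    intro ω ω₁
    constructor
    · intro hEq
      have h1 := congrArg Prod.fst hEq
      have h2 := congrArg Prod.snd hEq
      simp only [hd] at h1 h2
      constructor
      · intro i hi
        have := congrFun h1 i
        rwa [if_pos hi, if_pos hi] at this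
      · intro i hi
        have := congrFun h2 i
        rwa [if_pos hi, if_pos hi] at this
    · rintro ⟨h1, h2⟩
      simp only [hd, Prod.mk.injEq]
      constructor
      · funext i
        by_cases hi : i < j
        · rw [if_pos hi, if_pos hi]; exact h1 i hi
        · rw [if_neg hi, if_neg hi]
      · funext i
        by_cases hi : i ≤ j
        · rw [if_pos hi, if_pos hi]; exact h2 i hi
        · rw [if_neg hi, if_neg hi]
  rw [← Finset.sum_fiberwise_of_maps_to (g := d) (t := Finset.univ.image d)
      (fun ω _ => Finset.mem_image_of_mem _ (Finset.mem_univ ω))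
      (fun ω => (if A j ω = a then
        R ω / cpr μ (fun ω' => A j ω' = a)
          (fun ω' => (∀ i < j, A i ω' = A i ω) ∧ (∀ i ≤ j, L i ω' = L i ω))
      else 0) * μ ω),
    ← Finset.sum_fiberwise_of_maps_to (g := d) (t := Finset.univ.image d)
      (fun ω _ => Finset.mem_image_of_mem _ (Finset.mem_univ ω))
      (fun ω => R ω * μ ω)]
  refine Finset.sum_congr rfl fun p hp => ?_
  obtain ⟨ω₁, -, hω₁⟩ := Finset.mem_image.mp hp
  subst hω₁
  have hmemHb : ∀ ω, d ω = d ω₁ ↔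
      ((∀ i < j, A i ω = A i ω₁) ∧ (∀ i ≤ j, L i ω = L i ω₁)) := fun ω => hdiff ω ω₁
  have hcprEq : ∀ ω, ((∀ i < j, A i ω = A i ω₁) ∧ (∀ i ≤ j, L i ω = L i ω₁)) →
      cpr μ (fun ω' => A j ω' = a)
        (fun ω' => (∀ i < j, A i ω' = A i ω) ∧ (∀ i ≤ j, L i ω' = L i ω))
      = cpr μ (fun ω' => A j ω' = a)
        (fun ω' => (∀ i < j, A i ω' = A i ω₁) ∧ (∀ i ≤ j, L i ω' = L i ω₁)) := by
    intro ω hω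
    refine cpr_congr μ (fun _ => Iff.rfl) fun ω' => ?_
    constructor
    · rintro ⟨u1, u2⟩
      exact ⟨fun i hi => (u1 i hi).trans (hω.1 i hi),
             fun i hi => (u2 i hi).trans (hω.2 i hi)⟩
    · rintro ⟨u1, u2⟩
      exact ⟨fun i hi => (u1 i hi).trans (hω.1 i hi).symm,
             fun i hi => (u2 i hi).trans (hω.2 i hi).symm⟩
  rcases eq_or_lt_of_le (pr_nonneg hμ
      (fun ω => (∀ i < j, A i ω = A i ω₁) ∧ (∀ i ≤ j, L i ω = L i ω₁))) with h0 | hpos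
  · refine Eq.trans (Finset.sum_eq_zero ?_) (Eq.symm (Finset.sum_eq_zero ?_)) <;>
      intro ω hω <;>
      rw [mu_eq_zero hμ h0.symm ω ((hmemHb ω).mp (Finset.mem_filter.mp hω).2), mul_zero]
  · have hgpos : 0 < cpr μ (fun ω' => A j ω' = a)
        (fun ω' => (∀ i < j, A i ω' = A i ω₁) ∧ (∀ i ≤ j, L i ω' = L i ω₁)) := by
      obtain ⟨ω', hω', hμω'⟩ := pr_pos_elim hμ hpos
      have hp2 := POSj ω' hμω'
      rwa [hcprEq ω' hω'] at hp2
    have step1 : ∑ ω ∈ Finset.univ.filter (fun ω => d ω = d ω₁),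
        (if A j ω = a then
          R ω / cpr μ (fun ω' => A j ω' = a)
            (fun ω' => (∀ i < j, A i ω' = A i ω) ∧ (∀ i ≤ j, L i ω' = L i ω))
        else 0) * μ ω
      = ∑ ω ∈ Finset.univ.filter (fun ω => d ω = d ω₁),
        (if A j ω = a then
          R ω / cpr μ (fun ω' => A j ω' = a)
            (fun ω' => (∀ i < j, A i ω' = A i ω₁) ∧ (∀ i ≤ j, L i ω' = L i ω₁))
        else 0) * μ ω := by
      refine Finset.sum_congr rfl fun ω hω => ?_
      rw [hcprEq ω ((hmemHb ω).mp (Finset.mem_filter.mp hω).2)]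
    rw [step1]
    have expand : ∀ F : Ω → ℝ,
        ∑ ω ∈ Finset.univ.filter (fun ω => d ω = d ω₁), F ω
        = ∑ x ∈ (Finset.univ.filter (fun ω => d ω = d ω₁)).image
            (fun ω => fun (ar : ℕ → 𝒜) (jj : ℕ) => CL ar jj ω),
          ∑ ω ∈ (Finset.univ.filter (fun ω => d ω = d ω₁)).filter
            (fun ω => (fun (ar : ℕ → 𝒜) (jj : ℕ) => CL ar jj ω) = x), F ω :=
      fun F => (Finset.sum_fiberwise_of_maps_to
        (fun ω hω => Finset.mem_image_of_mem _ hω) F).symm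
    rw [expand, expand]
    refine Finset.sum_congr rfl fun x hx => ?_
    obtain ⟨ω₂, hω₂S, hω₂x⟩ := Finset.mem_image.mp hx
    have hHbω₂ := (hmemHb ω₂).mp (Finset.mem_filter.mp hω₂S).2
    have hXiff : ∀ ω : Ω, ((fun (ar : ℕ → 𝒜) (jj : ℕ) => CL ar jj ω) = x)
        ↔ (∀ ar jj, CL ar jj ω = x ar jj) := by
      intro ω
      constructor
      · intro hEq ar jj
        exact congrFun (congrFun hEq ar) jj
      · intro hall
        funext ar jj
        exact hall ar jj
    have hRconst : ∀ ω : Ω, d ω = d ω₁ → (∀ ar jj, CL ar jj ω = x ar jj) → R ω = R ω₂ := by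
      intro ω h1 h2
      have hHbω := (hmemHb ω).mp h1
      refine hR ω ω₂ ?_ ?_
      · intro ar jj
        rw [h2 ar jj, ((hXiff ω₂).mp hω₂x ar jj).symm]
      · intro i hi
        exact (hHbω.1 i hi).trans (hHbω₂.1 i hi).symm
    have hne : pr μ (fun ω => (∀ i < j, A i ω = A i ω₁) ∧ (∀ i ≤ j, L i ω = L i ω₁)) ≠ 0 :=
      ne_of_gt hpos
    have hsra' : cpr μ (fun ω => A j ω = a ∧ ∀ ar jj, CL ar jj ω = x ar jj)
          (fun ω => (∀ i < j, A i ω = A i ω₁) ∧ (∀ i ≤ j, L i ω = L i ω₁))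
        = cpr μ (fun ω => A j ω = a)
            (fun ω => (∀ i < j, A i ω = A i ω₁) ∧ (∀ i ≤ j, L i ω = L i ω₁))
          * cpr μ (fun ω => ∀ ar jj, CL ar jj ω = x ar jj)
            (fun ω => (∀ i < j, A i ω = A i ω₁) ∧ (∀ i ≤ j, L i ω = L i ω₁)) :=
      SRAj x (fun i => A i ω₁) (fun i => L i ω₁) hpos
    have key : pr μ (fun ω => (A j ω = a ∧ ∀ ar jj, CL ar jj ω = x ar jj) ∧
          ((∀ i < j, A i ω = A i ω₁) ∧ (∀ i ≤ j, L i ω = L i ω₁)))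
        = cpr μ (fun ω' => A j ω' = a)
            (fun ω' => (∀ i < j, A i ω' = A i ω₁) ∧ (∀ i ≤ j, L i ω' = L i ω₁))
          * pr μ (fun ω => (∀ ar jj, CL ar jj ω = x ar jj) ∧
            ((∀ i < j, A i ω = A i ω₁) ∧ (∀ i ≤ j, L i ω = L i ω₁))) := by
      have e1 : pr μ (fun ω => (A j ω = a ∧ ∀ ar jj, CL ar jj ω = x ar jj) ∧
            ((∀ i < j, A i ω = A i ω₁) ∧ (∀ i ≤ j, L i ω = L i ω₁)))
          = cpr μ (fun ω => A j ω = a ∧ ∀ ar jj, CL ar jj ω = x ar jj)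
              (fun ω => (∀ i < j, A i ω = A i ω₁) ∧ (∀ i ≤ j, L i ω = L i ω₁))
            * pr μ (fun ω => (∀ i < j, A i ω = A i ω₁) ∧ (∀ i ≤ j, L i ω = L i ω₁)) := by
        unfold cpr
        rw [div_mul_cancel₀ _ hne]
      have e2 : cpr μ (fun ω => ∀ ar jj, CL ar jj ω = x ar jj)
            (fun ω => (∀ i < j, A i ω = A i ω₁) ∧ (∀ i ≤ j, L i ω = L i ω₁))
          * pr μ (fun ω => (∀ i < j, A i ω = A i ω₁) ∧ (∀ i ≤ j, L i ω = L i ω₁))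
          = pr μ (fun ω => (∀ ar jj, CL ar jj ω = x ar jj) ∧
            ((∀ i < j, A i ω = A i ω₁) ∧ (∀ i ≤ j, L i ω = L i ω₁))) := by
        unfold cpr
        rw [div_mul_cancel₀ _ hne]
      rw [e1, hsra', mul_assoc, e2]
    have lhs_eq : ∑ ω ∈ (Finset.univ.filter (fun ω => d ω = d ω₁)).filter
          (fun ω => (fun (ar : ℕ → 𝒜) (jj : ℕ) => CL ar jj ω) = x),
        (if A j ω = a then
          R ω / cpr μ (fun ω' => A j ω' = a)
            (fun ω' => (∀ i < j, A i ω' = A i ω₁) ∧ (∀ i ≤ j, L i ω' = L i ω₁))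
        else 0) * μ ω
      = (R ω₂ / cpr μ (fun ω' => A j ω' = a)
            (fun ω' => (∀ i < j, A i ω' = A i ω₁) ∧ (∀ i ≤ j, L i ω' = L i ω₁)))
        * pr μ (fun ω => (A j ω = a ∧ ∀ ar jj, CL ar jj ω = x ar jj) ∧
            ((∀ i < j, A i ω = A i ω₁) ∧ (∀ i ≤ j, L i ω = L i ω₁))) := by
      rw [Finset.filter_filter, Finset.sum_filter]
      unfold pr
      rw [Finset.mul_sum]
      refine Finset.sum_congr rfl fun ω _ => ?_
      by_cases h1 : d ω = d ω₁
      · by_cases h2 : (fun (ar : ℕ → 𝒜) (jj : ℕ) => CL ar jj ω) = x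
        · have hXω := (hXiff ω).mp h2
          have hHbω := (hmemHb ω).mp h1
          by_cases h3 : A j ω = a
          · rw [if_pos ⟨h1, h2⟩, if_pos h3, if_pos ⟨⟨h3, hXω⟩, hHbω⟩,
              hRconst ω h1 hXω]
          · rw [if_pos ⟨h1, h2⟩, if_neg h3, if_neg (fun hcon => h3 hcon.1.1),
              zero_mul, mul_zero]
        · rw [if_neg (fun hcon => h2 hcon.2),
            if_neg (fun hcon => h2 ((hXiff ω).mpr hcon.1.2)), mul_zero]
      · rw [if_neg (fun hcon => h1 hcon.1),
          if_neg (fun hcon => h1 ((hmemHb ω).mpr hcon.2)), mul_zero]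
    have rhs_eq : ∑ ω ∈ (Finset.univ.filter (fun ω => d ω = d ω₁)).filter
          (fun ω => (fun (ar : ℕ → 𝒜) (jj : ℕ) => CL ar jj ω) = x), R ω * μ ω
      = R ω₂ * pr μ (fun ω => (∀ ar jj, CL ar jj ω = x ar jj) ∧
          ((∀ i < j, A i ω = A i ω₁) ∧ (∀ i ≤ j, L i ω = L i ω₁))) := by
      rw [Finset.filter_filter, Finset.sum_filter]
      unfold pr
      rw [Finset.mul_sum]
      refine Finset.sum_congr rfl fun ω _ => ?_
      by_cases h1 : d ω = d ω₁
      · by_cases h2 : (fun (ar : ℕ → 𝒜) (jj : ℕ) => CL ar jj ω) = x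
        · rw [if_pos ⟨h1, h2⟩, if_pos ⟨(hXiff ω).mp h2, (hmemHb ω).mp h1⟩,
            hRconst ω h1 ((hXiff ω).mp h2)]
        · rw [if_neg (fun hcon => h2 hcon.2),
            if_neg (fun hcon => h2 ((hXiff ω).mpr hcon.1)), mul_zero]
      · rw [if_neg (fun hcon => h1 hcon.1),
          if_neg (fun hcon => h1 ((hmemHb ω).mpr hcon.2)), mul_zero]
    rw [lhs_eq, rhs_eq, key]
    have hgne : cpr μ (fun ω' => A j ω' = a)
        (fun ω' => (∀ i < j, A i ω' = A i ω₁) ∧ (∀ i ≤ j, L i ω' = L i ω₁)) ≠ 0 :=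
      ne_of_gt hgpos
    field_simp

/-- unbiasedness of the pooled IPTW estimating function for a
correctly specified pooled HRMSM over the time points `t ∈ 𝒯ₛ`. -/
theorem hrmsm_pooled_iptw_unbiased
    {Ω 𝒜 ℒ 𝒱 : Type} [Fintype Ω]
    (μ : Ω → ℝ) (hμ : ∀ ω, 0 ≤ μ ω) (hsum : ∑ ω, μ ω = 1)
    (K s : ℕ) (hs : 1 ≤ s) (hsK : s ≤ K + 1)
    (A : ℕ → Ω → 𝒜) (CL : (ℕ → 𝒜) → ℕ → Ω → ℒ) (L : ℕ → Ω → ℒ) (Y : ℒ → ℝ)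
    (hTO : ∀ (a a' : ℕ → 𝒜) (j : ℕ), (∀ i < j, a i = a' i) → ∀ ω, CL a j ω = CL a' j ω)
    (hcons : ∀ j ω, L j ω = CL (fun i => A i ω) j ω)
    (SRA : ∀ j ≤ K, ∀ (a : 𝒜) (x : (ℕ → 𝒜) → ℕ → ℒ) (ab : ℕ → 𝒜) (lb : ℕ → ℒ),
      pr μ (fun ω => (∀ i < j, A i ω = ab i) ∧ (∀ i ≤ j, L i ω = lb i)) > 0 →
      cpr μ (fun ω => A j ω = a ∧ ∀ (ar : ℕ → 𝒜) (jj : ℕ), CL ar jj ω = x ar jj)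
        (fun ω => (∀ i < j, A i ω = ab i) ∧ (∀ i ≤ j, L i ω = lb i)) =
      cpr μ (fun ω => A j ω = a)
        (fun ω => (∀ i < j, A i ω = ab i) ∧ (∀ i ≤ j, L i ω = lb i)) *
      cpr μ (fun ω => ∀ (ar : ℕ → 𝒜) (jj : ℕ), CL ar jj ω = x ar jj)
        (fun ω => (∀ i < j, A i ω = ab i) ∧ (∀ i ≤ j, L i ω = lb i)))
    (POS : ∀ j ≤ K, ∀ (a : 𝒜) (ω : Ω), μ ω > 0 →
      cpr μ (fun ω' => A j ω' = a)
        (fun ω' => (∀ i < j, A i ω' = A i ω) ∧ (∀ i ≤ j, L i ω' = L i ω)) > 0)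
    (Ts : Finset ℕ) (hTs : ∀ t ∈ Ts, s - 1 ≤ t ∧ t ≤ K)
    (V : ℕ → Ω → 𝒱)
    (hV : ∀ t ∈ Ts, ∀ ω ω', (∀ i < t + 1 - s, A i ω = A i ω') →
      (∀ i ≤ t + 1 - s, L i ω = L i ω') → V t ω = V t ω')
    (m : ℕ → (ℕ → 𝒜) → 𝒱 → ℝ)
    (hm : ∀ t ∈ Ts, ∀ (a a' : ℕ → 𝒜) (v : 𝒱),
      (∀ i, t + 1 - s ≤ i → i ≤ t → a i = a' i) → m t a v = m t a' v)
    (hmodel : ∀ t ∈ Ts, ∀ (ab : ℕ → 𝒜) (v : 𝒱), pr μ (fun ω => V t ω = v) > 0 →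
      cex μ (fun ω => Y (CL (fun i => if i < t + 1 - s then A i ω else ab i) (t + 1) ω))
        (fun ω => V t ω = v) = m t ab v)
    (h : ℕ → (ℕ → 𝒜) → 𝒱 → ℝ)
    (hh : ∀ t ∈ Ts, ∀ (a a' : ℕ → 𝒜) (v : 𝒱),
      (∀ i, t + 1 - s ≤ i → i ≤ t → a i = a' i) → h t a v = h t a' v) :
    ex μ (fun ω => ∑ t ∈ Ts,
      h t (fun i => A i ω) (V t ω) *
      (Y (L (t + 1) ω) - m t (fun i => A i ω) (V t ω)) /
      ∏ j ∈ Finset.Ico (t + 1 - s) (t + 1),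
        cpr μ (fun ω' => A j ω' = A j ω)
          (fun ω' => (∀ i < j, A i ω' = A i ω) ∧ (∀ i ≤ j, L i ω' = L i ω))) = 0 := by
  classical
  rcases isEmpty_or_nonempty Ω with hE | hNE
  · unfold ex
    rw [Finset.univ_eq_empty, Finset.sum_empty]
  unfold ex
  simp only [Finset.sum_mul]
  rw [Finset.sum_comm]
  refine Finset.sum_eq_zero fun t ht => ?_
  obtain ⟨hst, htK⟩ := hTs t ht
  set r := t + 1 - s with hr
  have hrt : r ≤ t := by omega
  set q : (ℕ → 𝒜) → Ω → ℝ := fun b ω =>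
    h t b (V t ω) * (Y (CL (fun i => if i < r then A i ω else b i) (t + 1) ω) - m t b (V t ω))
    with hq
  -- base claim: for any regimen b, the counterfactual residual has mean zero
  have base : ∀ b : ℕ → 𝒜, (∑ ω : Ω, q b ω * μ ω) = 0 := by
    intro b
    rw [← Finset.sum_fiberwise_of_maps_to (g := V t) (t := Finset.univ.image (V t))
        (fun ω _ => Finset.mem_image_of_mem _ (Finset.mem_univ ω)) (fun ω => q b ω * μ ω)]
    refine Finset.sum_eq_zero fun v _ => ?_
    rcases eq_or_lt_of_le (pr_nonneg hμ (fun ω => V t ω = v)) with h0 | hpos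
    · refine Finset.sum_eq_zero fun ω hω => ?_
      rw [mu_eq_zero hμ h0.symm ω (Finset.mem_filter.mp hω).2, mul_zero]
    · have hmod := hmodel t ht b v hpos
      unfold cex at hmod
      rw [div_eq_iff (ne_of_gt hpos)] at hmod
      simp only [] at hmod
      have h1 : ∑ ω ∈ Finset.univ.filter (fun ω => V t ω = v), q b ω * μ ω
          = h t b v * ((∑ ω : Ω, if V t ω = v then
              Y (CL (fun i => if i < r then A i ω else b i) (t + 1) ω) * μ ω else 0)
            - m t b v * pr μ (fun ω => V t ω = v)) := by
        rw [Finset.sum_filter]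
        have hterm : ∀ ω : Ω, (if V t ω = v then q b ω * μ ω else 0)
            = h t b v * ((if V t ω = v then
                Y (CL (fun i => if i < r then A i ω else b i) (t + 1) ω) * μ ω else 0)
              - m t b v * (if V t ω = v then μ ω else 0)) := by
          intro ω
          by_cases hv : V t ω = v
          · simp only [hq, hv, eq_self_iff_true, if_true]
            ring
          · simp [hv]
        rw [Finset.sum_congr rfl (fun ω _ => hterm ω), ← Finset.mul_sum]
        congr 1
        rw [Finset.sum_sub_distrib, ← Finset.mul_sum]
        rfl
      rw [h1, hmod]
      ring
  -- the inductive peeling claim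
  have SS : ∀ n, r ≤ n → n ≤ t + 1 → ∀ b : ℕ → 𝒜,
      ∑ ω : Ω, (if (∀ i ∈ Finset.Ico r n, A i ω = b i) then
          q b ω / ∏ i ∈ Finset.Ico r n,
            cpr μ (fun ω' => A i ω' = b i)
              (fun ω' => (∀ k < i, A k ω' = A k ω) ∧ (∀ k ≤ i, L k ω' = L k ω))
        else 0) * μ ω = 0 := by
    intro n hrn
    induction n, hrn using Nat.le_induction with
    | base =>
      intro _ b
      simp only [Finset.Ico_self, Finset.prod_empty, div_one, Finset.notMem_empty,
        false_implies, implies_true, if_true]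
      exact base b
    | succ n hrn ih =>
      intro hn1 b
      have hnK : n ≤ K := by omega
      have hnt : n ≤ t + 1 := by omega
      set RR : Ω → ℝ := fun ω =>
        if (∀ i ∈ Finset.Ico r n, A i ω = b i) then
          q b ω / ∏ i ∈ Finset.Ico r n,
            cpr μ (fun ω' => A i ω' = b i)
              (fun ω' => (∀ k < i, A k ω' = A k ω) ∧ (∀ k ≤ i, L k ω' = L k ω))
        else 0 with hRR
      have hRinv : ∀ ω ω', (∀ ar jj, CL ar jj ω = CL ar jj ω') →
          (∀ i < n, A i ω = A i ω') → RR ω = RR ω' := by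
        intro ω ω' hX hA
        have hL : ∀ i ≤ n, L i ω = L i ω' := by
          intro i hi
          rw [hcons i ω, hcons i ω', ← hX (fun k => A k ω') i]
          exact hTO _ _ i (fun k hk => hA k (by omega)) ω
        have hcond : (∀ i ∈ Finset.Ico r n, A i ω = b i)
            ↔ (∀ i ∈ Finset.Ico r n, A i ω' = b i) := by
          constructor
          · intro hall i hi
            rw [← hA i (Finset.mem_Ico.mp hi).2]
            exact hall i hi
          · intro hall i hi
            rw [hA i (Finset.mem_Ico.mp hi).2]
            exact hall i hi
        have hqeq : q b ω = q b ω' := by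
          have hVeq : V t ω = V t ω' :=
            hV t ht ω ω' (fun i hi => hA i (by omega)) (fun i hi => hL i (by omega))
          have hCL : CL (fun i => if i < r then A i ω else b i) (t + 1) ω
              = CL (fun i => if i < r then A i ω' else b i) (t + 1) ω' := by
            rw [← hX (fun i => if i < r then A i ω' else b i) (t + 1)]
            refine hTO _ _ (t + 1) (fun k hk => ?_) ω
            by_cases hkr : k < r
            · rw [if_pos hkr, if_pos hkr]
              exact hA k (by omega)
            · rw [if_neg hkr, if_neg hkr]
          simp only [hq]
          rw [hVeq, hCL]
        have hW : ∀ i ∈ Finset.Ico r n,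
            cpr μ (fun ω'' => A i ω'' = b i)
              (fun ω'' => (∀ k < i, A k ω'' = A k ω) ∧ (∀ k ≤ i, L k ω'' = L k ω))
            = cpr μ (fun ω'' => A i ω'' = b i)
              (fun ω'' => (∀ k < i, A k ω'' = A k ω') ∧ (∀ k ≤ i, L k ω'' = L k ω')) := by
          intro i hi
          have hin := Finset.mem_Ico.mp hi
          refine cpr_congr μ (fun _ => Iff.rfl) fun ω'' => ?_
          constructor
          · rintro ⟨u1, u2⟩
            exact ⟨fun k hk => (u1 k hk).trans (hA k (by omega)),
                   fun k hk => (u2 k hk).trans (hL k (by omega))⟩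
          · rintro ⟨u1, u2⟩
            exact ⟨fun k hk => (u1 k hk).trans (hA k (by omega)).symm,
                   fun k hk => (u2 k hk).trans (hL k (by omega)).symm⟩
        simp only [hRR]
        by_cases hc : ∀ i ∈ Finset.Ico r n, A i ω = b i
        · rw [if_pos hc, if_pos (hcond.mp hc), hqeq, Finset.prod_congr rfl hW]
        · rw [if_neg hc, if_neg (fun hc' => hc (hcond.mpr hc'))]
      have heq : ∀ ω : Ω, (if (∀ i ∈ Finset.Ico r (n + 1), A i ω = b i) then
            q b ω / ∏ i ∈ Finset.Ico r (n + 1),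
              cpr μ (fun ω' => A i ω' = b i)
                (fun ω' => (∀ k < i, A k ω' = A k ω) ∧ (∀ k ≤ i, L k ω' = L k ω))
          else 0)
          = (if A n ω = b n then
              RR ω / cpr μ (fun ω' => A n ω' = b n)
                (fun ω' => (∀ i < n, A i ω' = A i ω) ∧ (∀ i ≤ n, L i ω' = L i ω))
            else 0) := by
        intro ω
        by_cases hAn : A n ω = b n
        · by_cases hrest : ∀ i ∈ Finset.Ico r n, A i ω = b i
          · rw [if_pos (fun i hi => ?side), if_pos hAn]
            · simp only [hRR, if_pos hrest]
              rw [Finset.prod_Ico_succ_top hrn, div_div]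
            · case side =>
              have hin := Finset.mem_Ico.mp hi
              rcases Nat.lt_succ_iff_lt_or_eq.mp hin.2 with hlt | heq'
              · exact hrest i (Finset.mem_Ico.mpr ⟨hin.1, hlt⟩)
              · rw [heq']; exact hAn
          · rw [if_neg (fun hall => hrest (fun i hi => hall i
                (Finset.Ico_subset_Ico le_rfl (Nat.le_succ n) hi))), if_pos hAn]
            simp only [hRR, if_neg hrest, zero_div]
        · rw [if_neg (fun hall => hAn (hall n
              (Finset.mem_Ico.mpr ⟨hrn, Nat.lt_succ_self n⟩))), if_neg hAn]
      calc ∑ ω : Ω, (if (∀ i ∈ Finset.Ico r (n + 1), A i ω = b i) then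
            q b ω / ∏ i ∈ Finset.Ico r (n + 1),
              cpr μ (fun ω' => A i ω' = b i)
                (fun ω' => (∀ k < i, A k ω' = A k ω) ∧ (∀ k ≤ i, L k ω' = L k ω))
          else 0) * μ ω
          = ∑ ω : Ω, (if A n ω = b n then
              RR ω / cpr μ (fun ω' => A n ω' = b n)
                (fun ω' => (∀ i < n, A i ω' = A i ω) ∧ (∀ i ≤ n, L i ω' = L i ω))
            else 0) * μ ω :=
            Finset.sum_congr rfl fun ω _ => by rw [heq ω]
        _ = ∑ ω : Ω, RR ω * μ ω :=
            peel μ hμ A L CL n (b n) (SRA n hnK (b n))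
              (fun ω hω => POS n hnK (b n) ω hω) RR hRinv
        _ = 0 := by
            rw [hRR]
            exact ih hnt b
  -- assemble: decompose the t-th term according to the treatment segment
  set c : Ω → ℕ → 𝒜 := fun ω i => if i ∈ Finset.Ico r (t + 1) then A i ω else A r ω
    with hc
  rw [← Finset.sum_fiberwise_of_maps_to (g := c) (t := Finset.univ.image c)
      (fun ω _ => Finset.mem_image_of_mem _ (Finset.mem_univ ω))
      (fun ω => (h t (fun i => A i ω) (V t ω) *
        (Y (L (t + 1) ω) - m t (fun i => A i ω) (V t ω)) /
        ∏ j ∈ Finset.Ico r (t + 1),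
          cpr μ (fun ω' => A j ω' = A j ω)
            (fun ω' => (∀ i < j, A i ω' = A i ω) ∧ (∀ i ≤ j, L i ω' = L i ω))) * μ ω)]
  refine Finset.sum_eq_zero fun b hb => ?_
  obtain ⟨ω₁, -, hω₁⟩ := Finset.mem_image.mp hb
  have hbmem : ∀ ω, c ω = b ↔ (∀ i ∈ Finset.Ico r (t + 1), A i ω = b i) := by
    intro ω
    subst hω₁
    constructor
    · intro hEq i hi
      have h1 := congrFun hEq i
      simp only [hc] at h1 ⊢
      rw [if_pos hi, if_pos hi] at h1
      rw [if_pos hi]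
      exact h1
    · intro hall
      have hrm : r ∈ Finset.Ico r (t + 1) := Finset.mem_Ico.mpr ⟨le_rfl, by omega⟩
      funext i
      simp only [hc]
      by_cases hi : i ∈ Finset.Ico r (t + 1)
      · rw [if_pos hi, if_pos hi]
        have := hall i hi
        simp only [hc] at this
        rwa [if_pos hi] at this
      · rw [if_neg hi, if_neg hi]
        have := hall r hrm
        simp only [hc] at this
        rwa [if_pos hrm] at this
  rw [Finset.sum_filter]
  refine Eq.trans (Finset.sum_congr rfl fun ω _ => ?_) (SS (t + 1) (by omega) le_rfl b)
  by_cases hcb : c ω = b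
  · have hall : ∀ i ∈ Finset.Ico r (t + 1), A i ω = b i := (hbmem ω).mp hcb
    rw [if_pos hcb, if_pos hall]
    have hhh : h t (fun i => A i ω) (V t ω) = h t b (V t ω) :=
      hh t ht _ b (V t ω) (fun i hi1 hi2 => hall i (Finset.mem_Ico.mpr ⟨hi1, by omega⟩))
    have hmm' : m t (fun i => A i ω) (V t ω) = m t b (V t ω) :=
      hm t ht _ b (V t ω) (fun i hi1 hi2 => hall i (Finset.mem_Ico.mpr ⟨hi1, by omega⟩))
    have hYe : Y (L (t + 1) ω) = Y (CL (fun i => if i < r then A i ω else b i) (t + 1) ω) := by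
      rw [hcons (t + 1) ω]
      refine congrArg Y (hTO _ _ (t + 1) (fun k hk => ?_) ω)
      by_cases hkr : k < r
      · rw [if_pos hkr]
      · rw [if_neg hkr]
        exact hall k (Finset.mem_Ico.mpr ⟨by omega, hk⟩)
    have hWe : ∀ i ∈ Finset.Ico r (t + 1),
        cpr μ (fun ω' => A i ω' = A i ω)
          (fun ω' => (∀ k < i, A k ω' = A k ω) ∧ (∀ k ≤ i, L k ω' = L k ω))
        = cpr μ (fun ω' => A i ω' = b i)
          (fun ω' => (∀ k < i, A k ω' = A k ω) ∧ (∀ k ≤ i, L k ω' = L k ω)) := by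
      intro i hi
      rw [hall i hi]
    rw [hhh, hmm', hYe, Finset.prod_congr rfl hWe]
  · rw [if_neg hcb, if_neg (fun hall => hcb ((hbmem ω).mpr hall)), zero_mul]
end
end
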